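/- Let L be a finite complemented modular lattice and let ρ : L → ℤ be submodular (ρ(a)+ρ(b) ≥ ρ(a∨b)+ρ(a∧b)) and bounded increasing with respect to the height function (0 ≤ ρ(b)−ρ(a) ≤ hgt(b)−hgt(a) whenever a ≤ b). If L1, L2 ∈ L satisfy ρ(L1 ∨ J) = ρ(L1) for every atom J ≤ L2, then ρ(L1 ∨ L2) = ρ(L1). -/

import Mathlib

/-- Let `L` be a finite complemented modular lattice with height function `hgt`, and
`ρ : L → ℤ` submodular and bounded increasing. If `ρ (L1 ⊔ J) = ρ L1` for every atom
`J ≤ L2`, then `ρ (L1 ⊔ L2) = ρ L1`. -/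
theorem rho_sup_eq_of_atoms
    {L : Type*} [Lattice L] [BoundedOrder L] [Fintype L]
    [IsModularLattice L] [ComplementedLattice L]
    (hgt : L → ℤ) (hgt_bot : hgt ⊥ = 0)
    (hgt_cov : ∀ a b : L, a ⋖ b → hgt b = hgt a + 1)
    (ρ : L → ℤ)
    (hsub : ∀ a b : L, ρ (a ⊔ b) + ρ (a ⊓ b) ≤ ρ a + ρ b)
    (hbi : ∀ a b : L, a ≤ b → 0 ≤ ρ b - ρ a ∧ ρ b - ρ a ≤ hgt b - hgt a)
    (L1 L2 : L)
    (h : ∀ J : L, IsAtom J → J ≤ L2 → ρ (L1 ⊔ J) = ρ L1) :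
    ρ (L1 ⊔ L2) = ρ L1 := by
  have hmono : ∀ a b : L, a ≤ b → ρ a ≤ ρ b := by
    intro a b hab
    have := (hbi a b hab).1
    omega
  have wfgt : WellFounded (fun x y : L => x > y) := (Finite.to_wellFoundedGT).wf
  have key : ∀ a : L, (∀ J : L, IsAtom J → J ≤ L2 → ρ (a ⊔ J) = ρ a) →
      ρ (a ⊔ L2) = ρ a := by
    intro a
    induction a using wfgt.induction with
    | _ a IH =>
      intro hatoms
      by_cases hle : L2 ≤ a
      · rw [sup_eq_left.mpr hle]
      · -- find an atom J ≤ L2 with ¬ J ≤ a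
        have hne : (⟨a ⊓ L2, inf_le_right⟩ : Set.Iic L2) ≠ ⊤ := by
          intro hc
          exact hle (inf_eq_right.mp (congrArg Subtype.val hc))
        obtain ⟨c, hc1, hc2⟩ := exists_isCompl (⟨a ⊓ L2, inf_le_right⟩ : Set.Iic L2)
        have hcne : c ≠ ⊥ := by
          intro hc
          exact hne (codisjoint_bot.mp (hc ▸ hc2))
        have hcne' : (c : L) ≠ ⊥ := by
          intro hc
          exact hcne (Subtype.ext (by simpa using hc))
        obtain ⟨J, hJatom, hJle⟩ :=
          (IsAtomic.eq_bot_or_exists_atom_le (c : L)).resolve_left hcne'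
        have hJL2 : J ≤ L2 := hJle.trans c.2
        have hJa : ¬ J ≤ a := by
          intro hJa
          have h1 : J ≤ a ⊓ L2 := le_inf hJa hJL2
          have h2 : (⟨J, hJL2⟩ : Set.Iic L2) ≤ (⟨a ⊓ L2, inf_le_right⟩ : Set.Iic L2) ⊓ c :=
            le_inf h1 hJle
          have h3 : (⟨J, hJL2⟩ : Set.Iic L2) ≤ ⊥ := h2.trans hc1.le_bot
          have h4 : J ≤ (⊥ : L) := h3
          exact hJatom.1 (le_bot_iff.mp h4)
        have hlt : a < a ⊔ J := lt_of_le_of_ne le_sup_left (by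
          intro hc
          exact hJa (hc ▸ le_sup_right))
        have hρJ : ρ (a ⊔ J) = ρ a := hatoms J hJatom hJL2
        have hatoms' : ∀ K : L, IsAtom K → K ≤ L2 → ρ ((a ⊔ J) ⊔ K) = ρ (a ⊔ J) := by
          intro K hK hKL2
          have hρK : ρ (a ⊔ K) = ρ a := hatoms K hK hKL2
          have hs := hsub (a ⊔ J) (a ⊔ K)
          have hinf : ρ a ≤ ρ ((a ⊔ J) ⊓ (a ⊔ K)) :=
            hmono _ _ (le_inf le_sup_left le_sup_left)
          have hsup : (a ⊔ J) ⊔ (a ⊔ K) = (a ⊔ J) ⊔ K := by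
            rw [← sup_assoc]
            congr 1
            rw [sup_right_comm, sup_idem]
          have hle' : ρ ((a ⊔ J) ⊔ K) ≤ ρ a := by
            rw [hsup] at hs
            omega
          have hge : ρ (a ⊔ J) ≤ ρ ((a ⊔ J) ⊔ K) := hmono _ _ le_sup_left
          omega
        have := IH (a ⊔ J) hlt hatoms'
        rw [sup_assoc, sup_eq_right.mpr hJL2] at this
        rw [this, hρJ]
  exact key L1 h
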